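/- If A is an infinite superatomic Boolean algebra, then there exist Boolean homomorphisms φ_n : A → M (n ∈ ω) and φ : A → M such that (φ_n) converges pointwise to φ but does not converge uniformly. -/

import Mathlib

open MeasureTheory Set Filter Topology
open scoped symmDiff ENNReal

noncomputable section

universe u v

/-- The two-element set `{0,1}`, as an additive group (addition mod 2) with the
discrete topology. -/
inductive Two : Type
  | zero
  | one
  deriving DecidableEq

instance instFintypeTwo : Fintype Two :=
  ⟨{Two.zero, Two.one}, fun x => by cases x <;> simp⟩

instance : Zero Two := ⟨Two.zero⟩
instance : One Two := ⟨Two.one⟩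

/-- Addition modulo 2 on `{0,1}`. -/
def Two.add : Two → Two → Two
  | Two.zero, x => x
  | Two.one, Two.zero => Two.one
  | Two.one, Two.one => Two.zero

instance : Add Two := ⟨Two.add⟩
instance : Neg Two := ⟨fun x => x⟩

instance : AddCommGroup Two where
  add := (· + ·)
  zero := Two.zero
  neg := (- ·)
  add_assoc := by decide
  zero_add := by decide
  add_zero := by decide
  neg_add_cancel := by decide
  add_comm := by decide
  nsmul := nsmulRec
  zsmul := zsmulRec

instance : TopologicalSpace Two := ⊥
instance : DiscreteTopology Two := ⟨rfl⟩

instance : IsTopologicalAddGroup Two where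
  continuous_add := continuous_of_discreteTopology
  continuous_neg := continuous_of_discreteTopology

/-- The Cantor cube `{0,1}^κ`, with the product topology. -/
abbrev Cube (κ : Type u) : Type u := κ → Two

instance (κ : Type u) : MeasurableSpace (Cube κ) := borel _

instance (κ : Type u) : BorelSpace (Cube κ) := ⟨rfl⟩

/-- The fair-coin product measure `λ_κ` on `{0,1}^κ`: the Haar measure of the compact
group `{0,1}^κ`, normalized so that the whole space has measure `1`. -/
def lam (κ : Type u) : Measure (Cube κ) :=
  Measure.addHaarMeasure ⟨⟨Set.univ, isCompact_univ⟩, by simpa using Set.univ_nonempty⟩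

/-- The Boolean algebra of measurable subsets of `X`. -/
abbrev MSet (X : Type u) [MeasurableSpace X] : Type u := {s : Set X // MeasurableSet s}

/-- The ideal of `μ`-null sets in the Boolean ring of measurable subsets of `X`. -/
def nullIdeal {X : Type u} [MeasurableSpace X] (μ : Measure X) :
    Ideal (AsBoolRing (MSet X)) where
  carrier := {s | μ (ofBoolRing s : MSet X).1 = 0}
  zero_mem' := by
    show μ (ofBoolRing (0 : AsBoolRing (MSet X)) : MSet X).1 = 0
    rw [ofBoolRing_zero]
    simpa using measure_empty (μ := μ)
  add_mem' := by
    intro a b ha hb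
    show μ (ofBoolRing (a + b) : MSet X).1 = 0
    rw [ofBoolRing_add]
    refine le_antisymm ?_ zero_le
    calc μ ((ofBoolRing a ∆ ofBoolRing b : MSet X) : Set X)
        ≤ μ (((ofBoolRing a : MSet X) : Set X) ∪ ((ofBoolRing b : MSet X) : Set X)) := by
          refine measure_mono ?_
          simp only [symmDiff_def, MeasurableSet.sup_eq_union, MeasurableSet.coe_union,
            MeasurableSet.coe_sdiff]
          exact Set.union_subset_union Set.diff_subset Set.diff_subset
      _ ≤ μ ((ofBoolRing a : MSet X) : Set X) + μ ((ofBoolRing b : MSet X) : Set X) :=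
          measure_union_le _ _
      _ = 0 := by rw [ha, hb, add_zero]
  smul_mem' := by
    intro c x hx
    show μ (ofBoolRing (c * x) : MSet X).1 = 0
    rw [ofBoolRing_mul]
    refine le_antisymm ?_ zero_le
    calc μ ((ofBoolRing c ⊓ ofBoolRing x : MSet X) : Set X)
        ≤ μ ((ofBoolRing x : MSet X) : Set X) := by
          refine measure_mono ?_
          simp only [MeasurableSet.inf_eq_inter, MeasurableSet.coe_inter]
          exact Set.inter_subset_right
      _ = 0 := hx

instance {X : Type u} [MeasurableSpace X] (μ : Measure X) :
    BooleanRing (AsBoolRing (MSet X) ⧸ nullIdeal μ) where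
  isIdempotentElem a := by
    obtain ⟨x, rfl⟩ := Ideal.Quotient.mk_surjective a
    show _ * _ = _
    rw [← map_mul]
    exact congrArg _ (BooleanRing.mul_self x)

/-- The measure algebra of the measure `μ`: measurable sets modulo `μ`-null sets,
as a Boolean algebra.  For `μ = lam κ` this is the measure algebra `M_κ`. -/
abbrev MAlg (X : Type u) [MeasurableSpace X] (μ : Measure X) : Type u :=
  AsBoolAlg (AsBoolRing (MSet X) ⧸ nullIdeal μ)

/-- The class of a measurable set in the measure algebra. -/
def MAlg.mk {X : Type u} [MeasurableSpace X] (μ : Measure X) (s : MSet X) : MAlg X μ :=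
  toBoolAlg (Ideal.Quotient.mk (nullIdeal μ) (toBoolRing s))

/-- The measure induced by `μ` on its measure algebra `MAlg X μ` (with real values). -/
def mval {X : Type u} [MeasurableSpace X] (μ : Measure X) (a : MAlg X μ) : ℝ :=
  Quotient.liftOn' (ofBoolAlg a) (fun s => (μ (ofBoolRing s : MSet X).1).toReal)
    (by
      intro s t h
      have hst : s - t ∈ nullIdeal μ := by
        rwa [Submodule.quotientRel_def] at h
      have h0 : μ (((ofBoolRing s : MSet X) : Set X) ∆ ((ofBoolRing t : MSet X) : Set X)) = 0 := by
        have hn : μ ((ofBoolRing (s - t) : MSet X) : Set X) = 0 := hst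
        rw [ofBoolRing_sub] at hn
        simpa only [symmDiff_def, MeasurableSet.sup_eq_union, MeasurableSet.coe_union,
          MeasurableSet.coe_sdiff, Set.sup_eq_union] using hn
      have hc := measure_congr (μ := μ) (MeasureTheory.measure_symmDiff_eq_zero_iff.mp h0)
      simp only [hc])


section BA
variable {A : Type u} [BooleanAlgebra A]

attribute [local instance] Classical.propDecidable

/-- `x` is a finite join of atoms. -/
def IsFinJoin (x : A) : Prop := ∃ s : Finset A, (∀ b ∈ s, IsAtom b) ∧ x = s.sup id

lemma IsFinJoin.bot : IsFinJoin (⊥ : A) := ⟨∅, by simp, by simp⟩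

lemma IsFinJoin.sup {x y : A} (hx : IsFinJoin x) (hy : IsFinJoin y) : IsFinJoin (x ⊔ y) := by
  classical
  obtain ⟨s, hs, rfl⟩ := hx; obtain ⟨t, ht, rfl⟩ := hy
  exact ⟨s ∪ t, by intro b hb; rcases Finset.mem_union.mp hb with h | h; exacts [hs b h, ht b h],
    (Finset.sup_union).symm⟩

lemma eq_sup_filter {s : Finset A} (hs : ∀ b ∈ s, IsAtom b) {y : A} (hy : y ≤ s.sup id) :
    y = (s.filter (fun c => c ≤ y)).sup id := by
  apply le_antisymm
  · have h1 : y = s.sup (fun b => y ⊓ b) := by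
      rw [← Finset.sup_inf_distrib_left]
      exact (inf_eq_left.mpr hy).symm
    nth_rewrite 1 [h1]
    apply Finset.sup_le
    intro b hb
    rcases (hs b hb).le_iff.mp (inf_le_right : y ⊓ b ≤ b) with h | h
    · rw [h]; exact bot_le
    · have hby : b ≤ y := h ▸ inf_le_left
      have hmem : b ∈ s.filter (fun c => c ≤ y) := Finset.mem_filter.mpr ⟨hb, hby⟩
      calc y ⊓ b ≤ b := inf_le_right
        _ = id b := rfl
        _ ≤ _ := Finset.le_sup hmem
  · exact Finset.sup_le fun b hb => (Finset.mem_filter.mp hb).2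

lemma IsFinJoin.mono {x y : A} (hx : IsFinJoin x) (hy : y ≤ x) : IsFinJoin y := by
  obtain ⟨s, hs, rfl⟩ := hx
  exact ⟨s.filter (fun c => c ≤ y), fun b hb => hs b (Finset.mem_filter.mp hb).1,
    eq_sup_filter hs hy⟩

lemma atom_mem_of_le_sup {s : Finset A} (hs : ∀ b ∈ s, IsAtom b) {a : A}
    (ha : IsAtom a) (hax : a ≤ s.sup id) : a ∈ s := by
  have h := eq_sup_filter hs hax
  by_cases hne : (s.filter (fun c => c ≤ a)).Nonempty
  · obtain ⟨b, hb⟩ := hne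
    obtain ⟨hbs, hba⟩ := Finset.mem_filter.mp hb
    have : b = a := (ha.le_iff_eq (hs b hbs).1).mp hba
    exact this ▸ hbs
  · rw [Finset.not_nonempty_iff_eq_empty.mp hne] at h
    simp at h
    exact absurd h ha.1

lemma top_not_finjoin [Infinite A] : ¬ IsFinJoin (⊤ : A) := by
  rintro ⟨s, hs, htop⟩
  haveI : Finite A := by
    have hinj : Function.Injective (fun x : A => (⟨s.filter (fun c => c ≤ x),
        Finset.mem_powerset.mpr (Finset.filter_subset _ _)⟩ : s.powerset)) := by
      intro x y h
      have hxy : s.filter (fun c => c ≤ x) = s.filter (fun c => c ≤ y) :=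
        congrArg Subtype.val h
      have hx : x = (s.filter (fun c => c ≤ x)).sup id := eq_sup_filter hs (htop ▸ le_top)
      have hy' : y = (s.filter (fun c => c ≤ y)).sup id := eq_sup_filter hs (htop ▸ le_top)
      rw [hx, hy', hxy]
    exact Finite.of_injective _ hinj
  exact not_finite A

end BA

section Tree
variable {A : Type v} [BooleanAlgebra A]

/-- All lists of booleans of length `n`. -/
def levelSet : ℕ → Finset (List Bool)
  | 0 => {[]}
  | n+1 => (levelSet n).biUnion fun σ =>
      insert (true :: σ) {false :: σ}

lemma mem_levelSet {n : ℕ} {σ : List Bool} : σ ∈ levelSet n ↔ σ.length = n := by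
  induction n generalizing σ with
  | zero => simp [levelSet]
  | succ n ih =>
    simp only [levelSet, Finset.mem_biUnion, Finset.mem_insert, Finset.mem_singleton]
    constructor
    · rintro ⟨τ, hτ, rfl | rfl⟩ <;> simp [ih.mp hτ]
    · intro h
      cases σ with
      | nil => simp at h
      | cons b τ =>
        refine ⟨τ, ih.mpr (by simpa using h), ?_⟩
        cases b
        · right; rfl
        · left; rfl

/-- Main tree lemma: if there is a "splittable" predicate, the superatomicity
hypothesis fails. -/
lemma tree_contra
    (hsuper : ∀ S : Set A,
      (⊥ ∈ S ∧ (∀ a ∈ S, aᶜ ∈ S) ∧ ∀ a ∈ S, ∀ b ∈ S, a ⊔ b ∈ S) →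
      ∃ a ∈ S, a ≠ ⊥ ∧ ∀ b ∈ S, b ≤ a → b = ⊥ ∨ b = a)
    (P : A → Prop) (hPtop : P ⊤) (hPbot : ¬ P ⊥)
    (hsplit : ∀ z, P z → ∃ c, c ≤ z ∧ P c ∧ P (z \ c)) : False := by
  classical
  choose cf hcf1 hcf2 hcf3 using hsplit
  -- the tree of nodes
  let tt : List Bool → {z : A // P z} := fun σ =>
    σ.rec ⟨⊤, hPtop⟩ (fun b _ ih =>
      if b then ⟨cf ih.1 ih.2, hcf2 ih.1 ih.2⟩ else ⟨ih.1 \ cf ih.1 ih.2, hcf3 ih.1 ih.2⟩)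
  let t : List Bool → A := fun σ => (tt σ).1
  have htP : ∀ σ, P (t σ) := fun σ => (tt σ).2
  have ht_ne : ∀ σ, t σ ≠ ⊥ := fun σ h => hPbot (h ▸ htP σ)
  have ht_true : ∀ σ, t (true :: σ) = cf (t σ) (htP σ) := fun σ => rfl
  have ht_false : ∀ σ, t (false :: σ) = t σ \ cf (t σ) (htP σ) := fun σ => rfl
  have ht_children_le : ∀ (b : Bool) σ, t (b :: σ) ≤ t σ := by
    intro b σ; cases b
    · rw [ht_false]; exact sdiff_le
    · rw [ht_true]; exact hcf1 _ _
  have ht_children_sup : ∀ σ, t (true :: σ) ⊔ t (false :: σ) = t σ := by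
    intro σ; rw [ht_true, ht_false]
    exact sup_sdiff_cancel_right (hcf1 _ _)
  have ht_children_inf : ∀ σ, t (true :: σ) ⊓ t (false :: σ) = ⊥ := by
    intro σ; rw [ht_true, ht_false]
    exact inf_sdiff_self_right
  -- disjointness at a level
  have hdisj : ∀ σ τ : List Bool, σ.length = τ.length → σ ≠ τ → t σ ⊓ t τ = ⊥ := by
    intro σ
    induction σ with
    | nil => intro τ h hne; cases τ with
      | nil => exact absurd rfl hne
      | cons b τ => simp at h
    | cons b σ ih =>
      intro τ h hne
      cases τ with
      | nil => simp at h
      | cons c τ =>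
        by_cases hστ : σ = τ
        · subst hστ
          have hbc : b ≠ c := fun hbc => hne (by rw [hbc])
          cases b <;> cases c <;> first
            | exact absurd rfl hbc
            | rw [inf_comm]; exact ht_children_inf σ
            | exact ht_children_inf σ
        · have h0 : t σ ⊓ t τ = ⊥ := ih τ (by simpa using h) hστ
          have : t (b :: σ) ⊓ t (c :: τ) ≤ t σ ⊓ t τ :=
            inf_le_inf (ht_children_le _ _) (ht_children_le _ _)
          exact le_bot_iff.mp (h0 ▸ this)
  -- refinement
  have hrefine : ∀ (d : ℕ) (σ : List Bool),
      t σ = (levelSet d).sup (fun ρ => t (ρ ++ σ)) := by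
    intro d
    induction d with
    | zero => intro σ; simp [levelSet]
    | succ d ih =>
      intro σ
      rw [levelSet, Finset.sup_biUnion]
      have : ∀ τ ∈ levelSet d,
          (insert (true :: τ) {false :: τ} : Finset (List Bool)).sup (fun ρ => t (ρ ++ σ))
            = t (τ ++ σ) := by
        intro τ _
        rw [Finset.sup_insert, Finset.sup_singleton]
        show t (true :: (τ ++ σ)) ⊔ t (false :: (τ ++ σ)) = _
        exact ht_children_sup _
      rw [Finset.sup_congr rfl this]
      exact ih σ
  have hlevel_top : ∀ n, (levelSet n).sup t = ⊤ := by
    intro n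
    have := hrefine n []
    simp only [List.append_nil] at this
    simpa using this.symm
  -- the subalgebra
  set S : Set A := {x | ∃ n : ℕ, ∃ J : Finset (List Bool), J ⊆ levelSet n ∧ x = J.sup t}
    with hS
  -- bump representation level
  have hbump : ∀ (x : A) (n d : ℕ) (J : Finset (List Bool)), J ⊆ levelSet n → x = J.sup t →
      ∃ K : Finset (List Bool), K ⊆ levelSet (d + n) ∧ x = K.sup t := by
    intro x n d J hJ hxJ
    subst hxJ
    refine ⟨J.biUnion (fun σ => (levelSet d).image (fun ρ => ρ ++ σ)), ?_, ?_⟩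
    · intro σ hσ
      simp only [Finset.mem_biUnion, Finset.mem_image] at hσ
      obtain ⟨τ, hτ, ρ, hρ, rfl⟩ := hσ
      rw [mem_levelSet]
      simp [List.length_append, mem_levelSet.mp hρ, mem_levelSet.mp (hJ hτ)]
    · rw [Finset.sup_biUnion]
      apply Finset.sup_congr rfl
      intro σ _
      rw [Finset.sup_image]
      exact hrefine d σ
  have hdisjJ : ∀ (n : ℕ) (J K : Finset (List Bool)), J ⊆ levelSet n → K ⊆ levelSet n →
      (∀ σ ∈ J, σ ∉ K) → (J.sup t) ⊓ (K.sup t) = ⊥ := by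
    intro n J K hJ hK hJK
    rw [Finset.sup_inf_distrib_right]
    apply le_bot_iff.mp
    apply Finset.sup_le
    intro σ hσ
    rw [Finset.sup_inf_distrib_left]
    apply Finset.sup_le
    intro τ hτ
    have : σ ≠ τ := fun h => hJK σ hσ (h ▸ hτ)
    rw [hdisj σ τ (by rw [mem_levelSet.mp (hJ hσ), mem_levelSet.mp (hK hτ)]) this]
  -- closure properties
  have hbotS : (⊥ : A) ∈ S := ⟨0, ∅, by simp, by simp⟩
  have hcomplS : ∀ x ∈ S, xᶜ ∈ S := by
    rintro x ⟨n, J, hJ, rfl⟩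
    refine ⟨n, levelSet n \ J, Finset.sdiff_subset, ?_⟩
    have hsup : J.sup t ⊔ (levelSet n \ J).sup t = ⊤ := by
      rw [← Finset.sup_union, Finset.union_sdiff_of_subset hJ]
      exact hlevel_top n
    have hinf : J.sup t ⊓ (levelSet n \ J).sup t = ⊥ :=
      hdisjJ n J (levelSet n \ J) hJ Finset.sdiff_subset
        (fun σ hσ h => (Finset.mem_sdiff.mp h).2 hσ)
    exact IsCompl.compl_eq ⟨disjoint_iff.mpr hinf, codisjoint_iff.mpr hsup⟩
  have hsupS : ∀ x ∈ S, ∀ y ∈ S, x ⊔ y ∈ S := by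
    rintro x ⟨n, J, hJ, hx⟩ y ⟨m, K, hK, hy⟩
    obtain ⟨J', hJ', hx'⟩ := hbump x n (m + n - n) J hJ hx
    obtain ⟨K', hK', hy'⟩ := hbump y m (m + n - m) K hK hy
    have e1 : m + n - n + n = m + n := by omega
    have e2 : m + n - m + m = m + n := by omega
    rw [e1] at hJ'; rw [e2] at hK'
    exact ⟨m + n, J' ∪ K', Finset.union_subset hJ' hK', by rw [hx', hy', Finset.sup_union]⟩
  obtain ⟨a, haS, hane, hatom⟩ := hsuper S ⟨hbotS, hcomplS, hsupS⟩
  obtain ⟨n, J, hJ, rfl⟩ := haS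
  have : ∃ σ ∈ J, t σ ≠ ⊥ := by
    by_contra h
    push_neg at h
    apply hane
    apply le_bot_iff.mp
    exact Finset.sup_le fun σ hσ => le_bot_iff.mpr (h σ hσ)
  obtain ⟨σ, hσJ, htσ⟩ := this
  have hmemS : t (true :: σ) ∈ S := by
    refine ⟨n + 1, {true :: σ}, ?_, by simp⟩
    intro τ hτ
    rw [Finset.mem_singleton] at hτ
    subst hτ
    rw [mem_levelSet]
    simp [mem_levelSet.mp (hJ hσJ)]
  have hle : t (true :: σ) ≤ J.sup t :=
    le_trans (ht_children_le true σ) (Finset.le_sup hσJ)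
  rcases hatom _ hmemS hle with h | h
  · exact ht_ne (true :: σ) h
  · -- then t (false :: σ) ≤ t (true :: σ) and disjoint, so ⊥
    have h2 : t (false :: σ) ≤ J.sup t :=
      le_trans (ht_children_le false σ) (Finset.le_sup hσJ)
    rw [← h] at h2
    have : t (false :: σ) = ⊥ := by
      have := ht_children_inf σ
      rw [inf_eq_right.mpr h2] at this
      exact this
    exact ht_ne (false :: σ) this

end Tree

section QA
variable {A : Type w} [BooleanAlgebra A]

lemma IsAtom.le_sup_iff' {a x y : A} (ha : IsAtom a) : a ≤ x ⊔ y ↔ a ≤ x ∨ a ≤ y := by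
  constructor
  · intro h
    have h1 : a = (a ⊓ x) ⊔ (a ⊓ y) := by
      rw [← inf_sup_left]
      exact (inf_eq_left.mpr h).symm
    rcases ha.le_iff.mp (inf_le_left : a ⊓ x ≤ a) with h2 | h2
    · right
      rw [h2, bot_sup_eq] at h1
      exact h1.le.trans inf_le_right
    · left
      exact inf_eq_left.mp h2
  · rintro (h | h)
    · exact le_trans h le_sup_left
    · exact le_trans h le_sup_right

lemma exists_quotient_atom [Infinite A]
    (hsuper : ∀ S : Set A,
      (⊥ ∈ S ∧ (∀ a ∈ S, aᶜ ∈ S) ∧ ∀ a ∈ S, ∀ b ∈ S, a ⊔ b ∈ S) →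
      ∃ a ∈ S, a ≠ ⊥ ∧ ∀ b ∈ S, b ≤ a → b = ⊥ ∨ b = a) :
    ∃ u : A, ¬ IsFinJoin u ∧ ∀ x : A, IsFinJoin (x ⊓ u) ∨ IsFinJoin (u \ x) := by
  by_contra hno
  push_neg at hno
  refine tree_contra hsuper (fun z => ¬ IsFinJoin z) top_not_finjoin (by simp [IsFinJoin.bot]) ?_
  intro z hz
  obtain ⟨x, hx1, hx2⟩ := hno z hz
  refine ⟨x ⊓ z, inf_le_right, hx1, ?_⟩
  have : z \ (x ⊓ z) = z \ x := by
    rw [_root_.sdiff_eq, _root_.sdiff_eq, compl_inf, inf_sup_left]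
    simp
  rw [this]
  exact hx2

lemma atoms_below_infinite [Infinite A]
    (hsuper : ∀ S : Set A,
      (⊥ ∈ S ∧ (∀ a ∈ S, aᶜ ∈ S) ∧ ∀ a ∈ S, ∀ b ∈ S, a ⊔ b ∈ S) →
      ∃ a ∈ S, a ≠ ⊥ ∧ ∀ b ∈ S, b ≤ a → b = ⊥ ∨ b = a)
    {u : A} (hu : ¬ IsFinJoin u) :
    {b : A | IsAtom b ∧ b ≤ u}.Infinite := by
  intro hfin
  set f : A := hfin.toFinset.sup id with hf
  have hfF : IsFinJoin f :=
    ⟨hfin.toFinset, fun b hb => (hfin.mem_toFinset.mp hb).1, rfl⟩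
  set u' : A := u \ f with hu'
  have hu'ne : u' ≠ ⊥ := by
    intro h
    have : u ≤ f := by
      have := sdiff_eq_bot_iff.mp h
      exact this
    exact hu (hfF.mono this)
  have hnoatom : ∀ b : A, IsAtom b → ¬ b ≤ u' := by
    intro b hb hble
    have hbu : b ≤ u := le_trans hble sdiff_le
    have hbf : b ≤ f := Finset.le_sup (f := id) (hfin.mem_toFinset.mpr ⟨hb, hbu⟩)
    have : b ≤ f ⊓ fᶜ := le_inf hbf (le_trans hble (by rw [hu', _root_.sdiff_eq]; exact inf_le_right))
    rw [inf_compl_eq_bot] at this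
    exact hb.1 (le_bot_iff.mp this)
  refine tree_contra hsuper (fun z => z ⊓ u' ≠ ⊥) (by simpa using hu'ne) (by simp) ?_
  intro z hz
  have hnotatom : ¬ IsAtom (z ⊓ u') := fun h => hnoatom _ h inf_le_right
  have : ∃ c, c < z ⊓ u' ∧ c ≠ ⊥ := by
    by_contra h
    push_neg at h
    exact hnotatom ⟨hz, fun b hb => h b hb⟩
  obtain ⟨c, hclt, hcne⟩ := this
  refine ⟨c, le_trans hclt.le inf_le_left, ?_, ?_⟩
  · show c ⊓ u' ≠ ⊥
    have : c ⊓ u' = c := inf_eq_left.mpr (le_trans hclt.le inf_le_right)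
    rw [this]; exact hcne
  · have heq : (z \ c) ⊓ u' = (z ⊓ u') \ c := by
      rw [_root_.sdiff_eq, _root_.sdiff_eq, inf_right_comm]
    show (z \ c) ⊓ u' ≠ ⊥
    rw [heq]
    intro h
    exact lt_irrefl c (lt_of_lt_of_le hclt (sdiff_eq_bot_iff.mp h))

end QA

section Slots
variable {A : Type w} [BooleanAlgebra A] {u : A}

lemma uinf_bot (hu1 : ¬ IsFinJoin u) : ¬ IsFinJoin (u \ (⊥ : A)) := by
  rwa [sdiff_bot]

lemma uinf_top : IsFinJoin (u \ (⊤ : A)) := by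
  rw [sdiff_top]; exact IsFinJoin.bot

lemma uinf_inf {x y : A} :
    IsFinJoin (u \ (x ⊓ y)) ↔ IsFinJoin (u \ x) ∧ IsFinJoin (u \ y) := by
  rw [sdiff_inf]
  constructor
  · intro h
    exact ⟨h.mono le_sup_left, h.mono le_sup_right⟩
  · rintro ⟨h1, h2⟩
    exact h1.sup h2

lemma uinf_sup (hu1 : ¬ IsFinJoin u)
    (hu2 : ∀ x : A, IsFinJoin (x ⊓ u) ∨ IsFinJoin (u \ x)) {x y : A} :
    IsFinJoin (u \ (x ⊔ y)) ↔ IsFinJoin (u \ x) ∨ IsFinJoin (u \ y) := by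
  constructor
  · intro h
    by_contra hc
    push_neg at hc
    obtain ⟨hc1, hc2⟩ := hc
    have hx : IsFinJoin (x ⊓ u) := (hu2 x).resolve_right hc1
    have hy : IsFinJoin (y ⊓ u) := (hu2 y).resolve_right hc2
    apply hu1
    have hdec : u = (u ⊓ (x ⊔ y)) ⊔ (u \ (x ⊔ y)) := (sup_inf_sdiff u (x ⊔ y)).symm
    have : u = ((x ⊓ u) ⊔ (y ⊓ u)) ⊔ (u \ (x ⊔ y)) := by
      rw [inf_comm x u, inf_comm y u, ← inf_sup_left]
      exact hdec
    rw [this]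
    exact (hx.sup hy).sup h
  · rintro (h | h)
    · exact h.mono (sdiff_le_sdiff_left le_sup_left)
    · exact h.mono (sdiff_le_sdiff_left le_sup_right)

lemma eventually_agree {a : ℕ → A} (hinj : Function.Injective a)
    (hatom : ∀ n, IsAtom (a n)) (hle : ∀ n, a n ≤ u)
    (hu2 : ∀ x : A, IsFinJoin (x ⊓ u) ∨ IsFinJoin (u \ x)) (x : A) :
    ∃ N : ℕ, ∀ n, N ≤ n → (a n ≤ x ↔ IsFinJoin (u \ x)) := by
  by_cases h : IsFinJoin (u \ x)
  · obtain ⟨s, hs, hsup⟩ := h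
    have hbad : {n : ℕ | ¬ a n ≤ x} ⊆ a ⁻¹' (s : Set A) := by
      intro n hn
      have hninf : a n ⊓ x = ⊥ := by
        rcases (hatom n).le_iff.mp (inf_le_left : a n ⊓ x ≤ a n) with h2 | h2
        · exact h2
        · exact absurd (inf_eq_left.mp h2) hn
      have h3 : a n ≤ u \ x := by
        rw [_root_.sdiff_eq]
        exact le_inf (hle n) (le_compl_iff_disjoint_right.mpr (disjoint_iff.mpr hninf))
      exact atom_mem_of_le_sup hs (hatom n) (hsup ▸ h3)
    have hfin : {n : ℕ | ¬ a n ≤ x}.Finite :=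
      Set.Finite.subset (Set.Finite.preimage hinj.injOn s.finite_toSet) hbad
    obtain ⟨N, hN⟩ := hfin.bddAbove
    refine ⟨N + 1, fun n hn => ?_⟩
    have hnx : a n ≤ x := by
      by_contra hc
      exact absurd (hN hc) (by omega)
    exact ⟨fun _ => ⟨s, hs, hsup⟩, fun _ => hnx⟩
  · have h2 : IsFinJoin (x ⊓ u) := (hu2 x).resolve_right h
    obtain ⟨s, hs, hsup⟩ := h2
    have hbad : {n : ℕ | a n ≤ x} ⊆ a ⁻¹' (s : Set A) := by
      intro n hn
      have h3 : a n ≤ x ⊓ u := le_inf hn (hle n)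
      exact atom_mem_of_le_sup hs (hatom n) (hsup ▸ h3)
    have hfin : {n : ℕ | a n ≤ x}.Finite :=
      Set.Finite.subset (Set.Finite.preimage hinj.injOn s.finite_toSet) hbad
    obtain ⟨N, hN⟩ := hfin.bddAbove
    refine ⟨N + 1, fun n hn => ?_⟩
    have hnx : ¬ a n ≤ x := by
      intro hc
      exact absurd (hN hc) (by omega)
    exact ⟨fun hc => absurd hc hnx, fun hc => absurd hc h⟩

end Slots

lemma IsFinJoin.atom {A : Type u} [BooleanAlgebra A] {b : A} (h : IsAtom b) : IsFinJoin b :=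
  ⟨{b}, by simpa using h, by simp⟩

section SlotPred
variable {A : Type w} [BooleanAlgebra A]

/-- Slot predicates: slot `0` is a custom ultrafilter `b0`, slot `k+1` is the
principal ultrafilter at the atom `a k`. -/
def slotPred (a : ℕ → A) (b0 : A → Prop) : ℕ → A → Prop :=
  fun k x => if k = 0 then b0 x else a (k - 1) ≤ x

variable {a : ℕ → A} {b0 : A → Prop}

lemma slotPred_bot (hatom : ∀ n, IsAtom (a n)) (h0 : ¬ b0 ⊥) :
    ∀ k, ¬ slotPred a b0 k ⊥ := by
  intro k
  unfold slotPred
  by_cases hk : k = 0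
  · rw [if_pos hk]; exact h0
  · rw [if_neg hk, le_bot_iff]; exact (hatom _).1

lemma slotPred_top (h0 : b0 ⊤) : ∀ k, slotPred a b0 k ⊤ := by
  intro k
  unfold slotPred
  by_cases hk : k = 0
  · rw [if_pos hk]; exact h0
  · rw [if_neg hk]; exact le_top

lemma slotPred_inf (h0 : ∀ x y : A, b0 (x ⊓ y) ↔ b0 x ∧ b0 y) :
    ∀ k (x y : A), slotPred a b0 k (x ⊓ y) ↔ slotPred a b0 k x ∧ slotPred a b0 k y := by
  intro k x y
  unfold slotPred
  by_cases hk : k = 0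
  · rw [if_pos hk, if_pos hk, if_pos hk]; exact h0 x y
  · rw [if_neg hk, if_neg hk, if_neg hk]; exact le_inf_iff

lemma slotPred_sup (hatom : ∀ n, IsAtom (a n))
    (h0 : ∀ x y : A, b0 (x ⊔ y) ↔ b0 x ∨ b0 y) :
    ∀ k (x y : A), slotPred a b0 k (x ⊔ y) ↔ slotPred a b0 k x ∨ slotPred a b0 k y := by
  intro k x y
  unfold slotPred
  by_cases hk : k = 0
  · rw [if_pos hk, if_pos hk, if_pos hk]; exact h0 x y
  · rw [if_neg hk, if_neg hk, if_neg hk]; exact (hatom _).le_sup_iff'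

end SlotPred
set_option synthInstance.maxHeartbeats 1000000
section MA
variable {X : Type u} [MeasurableSpace X] (μ : Measure X)

lemma MAlg.mk_sup (s t : MSet X) : MAlg.mk μ (s ⊔ t) = MAlg.mk μ s ⊔ MAlg.mk μ t := by
  unfold MAlg.mk
  rw [← symmDiff_symmDiff_inf]
  show toBoolAlg (Ideal.Quotient.mk (nullIdeal μ)
      (toBoolRing s + toBoolRing t + toBoolRing s * toBoolRing t)) = _
  rw [map_add (Ideal.Quotient.mk (nullIdeal μ)) _ _, map_add (Ideal.Quotient.mk (nullIdeal μ)) _ _, map_mul (Ideal.Quotient.mk (nullIdeal μ)) _ _, toBoolAlg_add_add_mul]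

lemma MAlg.mk_inf (s t : MSet X) : MAlg.mk μ (s ⊓ t) = MAlg.mk μ s ⊓ MAlg.mk μ t := by
  unfold MAlg.mk
  show toBoolAlg (Ideal.Quotient.mk (nullIdeal μ) (toBoolRing s * toBoolRing t)) = _
  rw [map_mul (Ideal.Quotient.mk (nullIdeal μ)) _ _, toBoolAlg_mul]

lemma MAlg.mk_symmDiff (s t : MSet X) :
    MAlg.mk μ (s ∆ t) = MAlg.mk μ s ∆ MAlg.mk μ t := by
  unfold MAlg.mk
  show toBoolAlg (Ideal.Quotient.mk (nullIdeal μ) (toBoolRing s + toBoolRing t)) = _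
  rw [map_add (Ideal.Quotient.mk (nullIdeal μ)) _ _, toBoolAlg_add]

lemma MAlg.mk_bot : MAlg.mk μ (⊥ : MSet X) = ⊥ := by
  unfold MAlg.mk
  show toBoolAlg (Ideal.Quotient.mk (nullIdeal μ) (0 : AsBoolRing (MSet X))) = _
  rw [map_zero (Ideal.Quotient.mk (nullIdeal μ)), toBoolAlg_zero]

lemma MAlg.mk_top : MAlg.mk μ (⊤ : MSet X) = ⊤ := by
  unfold MAlg.mk
  show toBoolAlg (Ideal.Quotient.mk (nullIdeal μ) (1 : AsBoolRing (MSet X))) = _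
  rw [map_one (Ideal.Quotient.mk (nullIdeal μ)), toBoolAlg_one]

lemma mval_mk (s : MSet X) : mval μ (MAlg.mk μ s) = (μ s.1).toReal := rfl

lemma mval_mk_symmDiff (s t : MSet X) :
    mval μ (MAlg.mk μ s ∆ MAlg.mk μ t) = (μ ((s : Set X) ∆ (t : Set X))).toReal := by
  rw [← MAlg.mk_symmDiff, mval_mk]
  congr 1

end MA

section Blocks

lemma two_eq_zero_or_one (t : Two) : t = 0 ∨ t = 1 := by
  cases t
  · exact Or.inl rfl
  · exact Or.inr rfl

lemma two_zero_ne_one : (0 : Two) ≠ 1 := by decide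

/-- The all-ones point of the cube. -/
def onesPt : Cube ℕ := fun _ => (1 : Two)

/-- The `k`-th basic block: first `k` coordinates one, `k`-th coordinate zero. -/
def coreSet (k : ℕ) : Set (Cube ℕ) := {ω | (∀ i, i < k → ω i = 1) ∧ ω k = 0}

lemma isOpen_coord (i : ℕ) (c : Two) : IsOpen {ω : Cube ℕ | ω i = c} := by
  have h : {ω : Cube ℕ | ω i = c} = (fun ω : Cube ℕ => ω i) ⁻¹' {c} := rfl
  rw [h]
  exact IsOpen.preimage (continuous_apply i) (isOpen_discrete ({c} : Set Two))

lemma isOpen_coreSet (k : ℕ) : IsOpen (coreSet k) := by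
  have h : coreSet k = (⋂ i : Fin k, {ω : Cube ℕ | ω i.1 = 1}) ∩ {ω : Cube ℕ | ω k = 0} := by
    ext ω
    simp only [coreSet, Set.mem_inter_iff, Set.mem_iInter, Set.mem_setOf_eq]
    constructor
    · rintro ⟨h1, h2⟩; exact ⟨fun i => h1 i.1 i.2, h2⟩
    · rintro ⟨h1, h2⟩; exact ⟨fun i hi => h1 ⟨i, hi⟩, h2⟩
  rw [h]
  exact IsOpen.inter (isOpen_iInter_of_finite fun i => isOpen_coord i.1 1) (isOpen_coord k 0)

lemma measurableSet_onesPt : MeasurableSet {onesPt} := by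
  have h : {onesPt} = ⋂ i : ℕ, {ω : Cube ℕ | ω i = 1} := by
    ext ω
    simp only [Set.mem_singleton_iff, Set.mem_iInter, Set.mem_setOf_eq]
    constructor
    · rintro rfl i; rfl
    · intro h; funext i; exact h i
  rw [h]
  exact MeasurableSet.iInter fun i => (isOpen_coord i 1).measurableSet

/-- The blocks: block `0` also absorbs the all-ones point. -/
def Bset : ℕ → Set (Cube ℕ) := fun k => if k = 0 then coreSet 0 ∪ {onesPt} else coreSet k

lemma measurableSet_Bset (k : ℕ) : MeasurableSet (Bset k) := by
  unfold Bset
  split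
  · exact ((isOpen_coreSet 0).measurableSet).union measurableSet_onesPt
  · exact (isOpen_coreSet k).measurableSet

lemma onesPt_not_mem_coreSet (k : ℕ) : onesPt ∉ coreSet k := by
  rintro ⟨-, h⟩
  rw [show onesPt k = 1 from rfl] at h
  exact two_zero_ne_one h.symm

lemma coreSet_disjoint {j k : ℕ} (h : j ≠ k) (ω : Cube ℕ) :
    ω ∈ coreSet j → ω ∈ coreSet k → False := by
  rcases Nat.lt_or_ge j k with hlt | hge
  · rintro ⟨-, hj⟩ ⟨hk, -⟩
    exact two_zero_ne_one (hj.symm.trans (hk j hlt))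
  · have hlt : k < j := lt_of_le_of_ne hge (Ne.symm h)
    rintro ⟨hj, -⟩ ⟨-, hk⟩
    exact two_zero_ne_one (hk.symm.trans (hj k hlt))

lemma mem_Bset_cases {k : ℕ} {ω : Cube ℕ} (h : ω ∈ Bset k) :
    ω ∈ coreSet k ∨ (k = 0 ∧ ω = onesPt) := by
  unfold Bset at h
  by_cases h0 : k = 0
  · rw [if_pos h0] at h
    rcases h with h | h
    · exact Or.inl (by rw [h0]; exact h)
    · exact Or.inr ⟨h0, h⟩
  · exact Or.inl (by rwa [if_neg h0] at h)

lemma coreSet_subset_Bset (k : ℕ) : coreSet k ⊆ Bset k := by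
  unfold Bset
  by_cases h0 : k = 0
  · rw [if_pos h0, h0]
    exact Set.subset_union_left
  · rw [if_neg h0]

lemma Bset_disjoint {j k : ℕ} (h : j ≠ k) (ω : Cube ℕ) :
    ω ∈ Bset j → ω ∈ Bset k → False := by
  intro hj hk
  rcases mem_Bset_cases hj with hj' | ⟨hj0, hjp⟩
  · rcases mem_Bset_cases hk with hk' | ⟨hk0, hkp⟩
    · exact coreSet_disjoint h ω hj' hk'
    · exact onesPt_not_mem_coreSet j (hkp ▸ hj')
  · rcases mem_Bset_cases hk with hk' | ⟨hk0, hkp⟩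
    · exact onesPt_not_mem_coreSet k (hjp ▸ hk')
    · exact h (hj0.trans hk0.symm)

lemma Bset_cover (ω : Cube ℕ) : ∃ k, ω ∈ Bset k := by
  classical
  by_cases hall : ∀ i, ω i = 1
  · refine ⟨0, ?_⟩
    have hω : ω = onesPt := funext fun i => hall i
    unfold Bset
    rw [if_pos rfl, hω]
    exact Or.inr rfl
  · push_neg at hall
    obtain ⟨i, hi⟩ := hall
    have hzero : ∃ i, ω i = 0 := ⟨i, (two_eq_zero_or_one (ω i)).resolve_right hi⟩
    let k := Nat.find hzero
    have hk : ω k = 0 := Nat.find_spec hzero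
    have hmin : ∀ i, i < k → ω i = 1 := fun i hik =>
      (two_eq_zero_or_one (ω i)).resolve_left (Nat.find_min hzero hik)
    exact ⟨k, coreSet_subset_Bset k ⟨hmin, hk⟩⟩

lemma lam_univ : lam ℕ Set.univ = 1 := Measure.addHaarMeasure_self

lemma lam_ne_top (s : Set (Cube ℕ)) : lam ℕ s ≠ ⊤ := by
  intro h
  have : lam ℕ s ≤ 1 := lam_univ ▸ measure_mono (Set.subset_univ s)
  rw [h] at this
  exact absurd this (by simp)

lemma lam_Bset_zero_pos : 0 < lam ℕ (Bset 0) := by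
  have h1 : coreSet 0 ⊆ Bset 0 := by
    unfold Bset; simp only [if_pos rfl]; exact Set.subset_union_left
  haveI : (lam ℕ).IsOpenPosMeasure := by
    unfold lam
    infer_instance
  have h2 : 0 < lam ℕ (coreSet 0) := by
    apply IsOpen.measure_pos _ (isOpen_coreSet 0)
    exact ⟨fun _ => 0, fun i hi => absurd hi (Nat.not_lt_zero i), rfl⟩
  exact lt_of_lt_of_le h2 (measure_mono h1)

end Blocks

section Phi
variable {X : Type u} [MeasurableSpace X] (μ : Measure X)

lemma mval_bot : mval μ (⊥ : MAlg X μ) = 0 := by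
  rw [← MAlg.mk_bot μ, mval_mk]
  have h : ((⊥ : MSet X) : Set X) = ∅ := rfl
  rw [h]
  simp

variable {A : Type w} [BooleanAlgebra A]

/-- The set attached to a family of slot predicates. -/
def PhiSet (v : ℕ → A → Prop) (x : A) : Set (Cube ℕ) := {ω | ∃ k, v k x ∧ ω ∈ Bset k}

lemma measurableSet_PhiSet (v : ℕ → A → Prop) (x : A) : MeasurableSet (PhiSet v x) := by
  classical
  have h : PhiSet v x = ⋃ k, (if v k x then Bset k else ∅) := by
    ext ω
    simp only [PhiSet, Set.mem_setOf_eq, Set.mem_iUnion]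
    constructor
    · rintro ⟨k, hv, hω⟩; exact ⟨k, by rw [if_pos hv]; exact hω⟩
    · rintro ⟨k, hω⟩
      by_cases hv : v k x
      · exact ⟨k, hv, by rwa [if_pos hv] at hω⟩
      · rw [if_neg hv] at hω; exact absurd hω (Set.notMem_empty ω)
  rw [h]
  exact MeasurableSet.iUnion fun k => by
    by_cases hv : v k x
    · rw [if_pos hv]; exact measurableSet_Bset k
    · rw [if_neg hv]; exact MeasurableSet.empty

variable {v : ℕ → A → Prop}

lemma PhiSet_bot (hbot : ∀ k, ¬ v k ⊥) : PhiSet v ⊥ = ∅ := by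
  ext ω
  simp only [PhiSet, Set.mem_setOf_eq, Set.mem_empty_iff_false, iff_false]
  rintro ⟨k, hv, -⟩
  exact hbot k hv

lemma PhiSet_top (htop : ∀ k, v k ⊤) : PhiSet v ⊤ = Set.univ := by
  ext ω
  simp only [PhiSet, Set.mem_setOf_eq, Set.mem_univ, iff_true]
  obtain ⟨k, hk⟩ := Bset_cover ω
  exact ⟨k, htop k, hk⟩

lemma PhiSet_sup (hsup : ∀ k (x y : A), v k (x ⊔ y) ↔ v k x ∨ v k y) (x y : A) :
    PhiSet v (x ⊔ y) = PhiSet v x ∪ PhiSet v y := by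
  ext ω
  simp only [PhiSet, Set.mem_setOf_eq, Set.mem_union]
  constructor
  · rintro ⟨k, hv, hω⟩
    rcases (hsup k x y).mp hv with h | h
    · exact Or.inl ⟨k, h, hω⟩
    · exact Or.inr ⟨k, h, hω⟩
  · rintro (⟨k, hv, hω⟩ | ⟨k, hv, hω⟩)
    · exact ⟨k, (hsup k x y).mpr (Or.inl hv), hω⟩
    · exact ⟨k, (hsup k x y).mpr (Or.inr hv), hω⟩

lemma PhiSet_inf (hinf : ∀ k (x y : A), v k (x ⊓ y) ↔ v k x ∧ v k y) (x y : A) :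
    PhiSet v (x ⊓ y) = PhiSet v x ∩ PhiSet v y := by
  ext ω
  simp only [PhiSet, Set.mem_setOf_eq, Set.mem_inter_iff]
  constructor
  · rintro ⟨k, hv, hω⟩
    obtain ⟨h1, h2⟩ := (hinf k x y).mp hv
    exact ⟨⟨k, h1, hω⟩, ⟨k, h2, hω⟩⟩
  · rintro ⟨⟨k, hv, hω⟩, ⟨j, hw, hω'⟩⟩
    have hkj : k = j := by
      by_contra hne
      exact Bset_disjoint hne ω hω hω'
    subst hkj
    exact ⟨k, (hinf k x y).mpr ⟨hv, hw⟩, hω⟩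

lemma PhiSet_congr {w : ℕ → A → Prop} {x : A} (h : ∀ k, v k x ↔ w k x) :
    PhiSet v x = PhiSet w x := by
  ext ω
  simp only [PhiSet, Set.mem_setOf_eq]
  constructor
  · rintro ⟨k, hv, hω⟩; exact ⟨k, (h k).mp hv, hω⟩
  · rintro ⟨k, hv, hω⟩; exact ⟨k, (h k).mpr hv, hω⟩

lemma PhiSet_symmDiff_eq_Bset0 {w : ℕ → A → Prop} {x : A}
    (hagree : ∀ k, k ≠ 0 → (v k x ↔ w k x)) (hv0 : v 0 x) (hw0 : ¬ w 0 x) :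
    (PhiSet v x) ∆ (PhiSet w x) = Bset 0 := by
  ext ω
  rw [Set.mem_symmDiff]
  simp only [PhiSet, Set.mem_setOf_eq]
  constructor
  · rintro (⟨⟨k, hv, hω⟩, hnot⟩ | ⟨⟨k, hw, hω⟩, hnot⟩)
    · by_cases hk : k = 0
      · exact hk ▸ hω
      · exact absurd ⟨k, (hagree k hk).mp hv, hω⟩ hnot
    · by_cases hk : k = 0
      · exact absurd (hk ▸ hw) hw0
      · exact absurd ⟨k, (hagree k hk).mpr hw, hω⟩ hnot
  · intro hω
    left
    refine ⟨⟨0, hv0, hω⟩, ?_⟩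
    rintro ⟨k, hw, hω'⟩
    by_cases hk : k = 0
    · exact hw0 (hk ▸ hw)
    · exact Bset_disjoint hk ω hω' hω

/-- The measurable set attached to slot predicates. -/
def PhiMSet (v : ℕ → A → Prop) (x : A) : MSet (Cube ℕ) :=
  ⟨PhiSet v x, measurableSet_PhiSet v x⟩

/-- The Boolean (bounded-lattice) homomorphism into the measure algebra attached to a
family of slot predicates, each of which behaves like an ultrafilter. -/
def PhiHom (v : ℕ → A → Prop)
    (hbot : ∀ k, ¬ v k ⊥) (htop : ∀ k, v k ⊤)
    (hinf : ∀ k (x y : A), v k (x ⊓ y) ↔ v k x ∧ v k y)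
    (hsup : ∀ k (x y : A), v k (x ⊔ y) ↔ v k x ∨ v k y) :
    BoundedLatticeHom A (MAlg (Cube ℕ) (lam ℕ)) where
  toFun x := MAlg.mk (lam ℕ) (PhiMSet v x)
  map_sup' x y := by
    rw [← MAlg.mk_sup]
    congr 1
    apply Subtype.ext
    rw [MeasurableSet.sup_eq_union, MeasurableSet.coe_union]
    exact PhiSet_sup hsup x y
  map_inf' x y := by
    rw [← MAlg.mk_inf]
    congr 1
    apply Subtype.ext
    rw [MeasurableSet.inf_eq_inter, MeasurableSet.coe_inter]
    exact PhiSet_inf hinf x y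
  map_top' := by
    rw [← MAlg.mk_top (lam ℕ)]
    congr 1
    apply Subtype.ext
    rw [MeasurableSet.coe_top]
    exact PhiSet_top htop
  map_bot' := by
    rw [← MAlg.mk_bot (lam ℕ)]
    congr 1
    apply Subtype.ext
    rw [MeasurableSet.coe_bot]
    exact PhiSet_bot hbot

lemma PhiHom_apply (v : ℕ → A → Prop) (hbot htop hinf hsup) (x : A) :
    PhiHom v hbot htop hinf hsup x = MAlg.mk (lam ℕ) (PhiMSet v x) := rfl

end Phi
/-- If `A` is an infinite superatomic Boolean algebra (every subalgebra contains an
atom), then there is a sequence of Boolean homomorphisms into the measure algebra `M`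
converging pointwise but not uniformly. -/
theorem nontrivial_convergence_of_homomorphisms_of_superatomic
    {A : Type u} [BooleanAlgebra A] [Infinite A]
    (hsuper : ∀ S : Set A,
      (⊥ ∈ S ∧ (∀ a ∈ S, aᶜ ∈ S) ∧ ∀ a ∈ S, ∀ b ∈ S, a ⊔ b ∈ S) →
      ∃ a ∈ S, a ≠ ⊥ ∧ ∀ b ∈ S, b ≤ a → b = ⊥ ∨ b = a) :
    ∃ (φn : ℕ → BoundedLatticeHom A (MAlg (Cube ℕ) (lam ℕ)))
      (φ : BoundedLatticeHom A (MAlg (Cube ℕ) (lam ℕ))),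
      (∀ a : A, Filter.Tendsto (fun n : ℕ => mval (lam ℕ) (φn n a ∆ φ a))
        Filter.atTop (nhds (0 : ℝ))) ∧
      ¬ (∀ ε : ℝ, 0 < ε → ∃ N : ℕ, ∀ n > N, ∀ a : A,
          mval (lam ℕ) (φn n a ∆ φ a) < ε) := by
  classical
  obtain ⟨u, hu1, hu2⟩ := exists_quotient_atom hsuper
  have hinfatoms := atoms_below_infinite hsuper hu1
  let e := hinfatoms.natEmbedding
  let a : ℕ → A := fun n => (e n).1
  have hainj : Function.Injective a := fun m n h => e.injective (Subtype.ext h)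
  have hatom : ∀ n, IsAtom (a n) := fun n => (e n).2.1
  have haleu : ∀ n, a n ≤ u := fun n => (e n).2.2
  have hajoin : ∀ n, IsFinJoin (a n) := fun n => IsFinJoin.atom (hatom n)
  have hnotlim : ∀ n, ¬ IsFinJoin (u \ a n) := by
    intro n h
    apply hu1
    have hdec : u = (u ⊓ a n) ⊔ (u \ a n) := (sup_inf_sdiff u (a n)).symm
    rw [hdec]
    exact ((hajoin n).mono inf_le_right).sup h
  -- the limit slot predicate
  have hb0bot : ¬ IsFinJoin (u \ (⊥ : A)) := uinf_bot hu1
  have hb0top : IsFinJoin (u \ (⊤ : A)) := uinf_top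
  have hb0inf : ∀ x y : A, IsFinJoin (u \ (x ⊓ y)) ↔ IsFinJoin (u \ x) ∧ IsFinJoin (u \ y) :=
    fun x y => uinf_inf
  have hb0sup : ∀ x y : A, IsFinJoin (u \ (x ⊔ y)) ↔ IsFinJoin (u \ x) ∨ IsFinJoin (u \ y) :=
    fun x y => uinf_sup hu1 hu2
  -- the `n`-th perturbed slot predicates use the ultrafilter at `a n` in slot 0
  have hanbot : ∀ n : ℕ, ¬ a n ≤ (⊥ : A) := by
    intro n h; exact (hatom n).1 (le_bot_iff.mp h)
  have hantop : ∀ n : ℕ, a n ≤ (⊤ : A) := fun n => le_top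
  have haninf : ∀ (n : ℕ) (x y : A), a n ≤ x ⊓ y ↔ a n ≤ x ∧ a n ≤ y := fun n x y => le_inf_iff
  have hansup : ∀ (n : ℕ) (x y : A), a n ≤ x ⊔ y ↔ a n ≤ x ∨ a n ≤ y :=
    fun n x y => (hatom n).le_sup_iff'
  refine ⟨fun n => PhiHom (slotPred a (fun x => a n ≤ x))
      (slotPred_bot hatom (hanbot n)) (slotPred_top (hantop n))
      (slotPred_inf (fun x y => haninf n x y)) (slotPred_sup hatom (fun x y => hansup n x y)),
    PhiHom (slotPred a (fun x => IsFinJoin (u \ x)))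
      (slotPred_bot hatom hb0bot) (slotPred_top hb0top)
      (slotPred_inf hb0inf) (slotPred_sup hatom hb0sup), ?_, ?_⟩
  · -- pointwise convergence
    intro x
    obtain ⟨N, hN⟩ := eventually_agree hainj hatom haleu hu2 x
    apply Filter.Tendsto.congr' _ (tendsto_const_nhds (x := (0 : ℝ)))
    rw [Filter.eventuallyEq_iff_exists_mem]
    refine ⟨{n | N ≤ n}, Filter.mem_atTop N, ?_⟩
    intro n hn
    have heq : PhiSet (slotPred a (fun y => a n ≤ y)) x
        = PhiSet (slotPred a (fun y => IsFinJoin (u \ y))) x := by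
      apply PhiSet_congr
      intro k
      by_cases hk : k = 0
      · subst hk
        unfold slotPred
        rw [if_pos rfl, if_pos rfl]
        exact hN n hn
      · unfold slotPred
        rw [if_neg hk, if_neg hk]
    show (0 : ℝ) = mval (lam ℕ) _
    rw [PhiHom_apply, PhiHom_apply]
    have : PhiMSet (slotPred a (fun y => a n ≤ y)) x
        = PhiMSet (slotPred a (fun y => IsFinJoin (u \ y))) x := Subtype.ext heq
    rw [this, symmDiff_self, mval_bot]
  · -- not uniform
    intro huni
    obtain ⟨N, hN⟩ := huni ((lam ℕ (Bset 0)).toReal)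
      (ENNReal.toReal_pos lam_Bset_zero_pos.ne' (lam_ne_top _))
    have hlt := hN (N + 1) (by omega) (a (N + 1))
    have heq : mval (lam ℕ)
        (PhiHom (slotPred a (fun x => a (N+1) ≤ x))
          (slotPred_bot hatom (hanbot (N+1))) (slotPred_top (hantop (N+1)))
          (slotPred_inf (fun x y => haninf (N+1) x y))
          (slotPred_sup hatom (fun x y => hansup (N+1) x y)) (a (N+1)) ∆
        PhiHom (slotPred a (fun x => IsFinJoin (u \ x)))
          (slotPred_bot hatom hb0bot) (slotPred_top hb0top)
          (slotPred_inf hb0inf) (slotPred_sup hatom hb0sup) (a (N+1)))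
        = (lam ℕ (Bset 0)).toReal := by
      rw [PhiHom_apply, PhiHom_apply, mval_mk_symmDiff]
      congr 1
      apply congrArg
      apply PhiSet_symmDiff_eq_Bset0
      · intro k hk
        unfold slotPred
        rw [if_neg hk, if_neg hk]
      · unfold slotPred
        rw [if_pos rfl]
      · unfold slotPred
        rw [if_pos rfl]
        exact hnotlim (N + 1)
    rw [heq] at hlt
    exact lt_irrefl _ hlt
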